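/- For every integer n ≥ 2, one has N⁺(n² + n) ≥ 1 and N⁻(n² + n) ≥ 1, and consequently M(n² + n) ≥ 9. -/

import Mathlib

/-- A pair of integers `(a, b)` is multiplicatively dependent: `ab ≠ 0` and
there is a nonzero pair of integer exponents `(k₁, k₂)` with `a^k₁ * b^k₂ = 1`
(evaluated in `ℚ`). -/
def MultDepPair (a b : ℤ) : Prop :=
  a * b ≠ 0 ∧ ∃ k : ℤ × ℤ, k ≠ 0 ∧ (a : ℚ) ^ k.1 * (b : ℚ) ^ k.2 = 1

/-- `MSet d` is the set of multiplicatively dependent pairs `(a, b) ∈ ℤ²`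
with difference `b - a = d`. -/
def MSet (d : ℤ) : Set (ℤ × ℤ) :=
  {p | MultDepPair p.1 p.2 ∧ p.2 - p.1 = d}

/-- `M d` is the number of multiplicatively dependent pairs with difference `d`. -/
noncomputable def M (d : ℤ) : ℕ := (MSet d).ncard

/-- `g` is a perfect power: `g = a ^ k` with `a ≥ 2`, `k ≥ 2`. -/
def IsPerfectPow (g : ℕ) : Prop := ∃ a k : ℕ, 2 ≤ a ∧ 2 ≤ k ∧ g = a ^ k

/-- `Nplus d` is the number of primitive solutions `(g, x, y)` of `g^y + g^x = d`
with `g ≥ 2` not a perfect power and `y > x ≥ 1`. -/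
noncomputable def Nplus (d : ℕ) : ℕ :=
  {T : ℕ × ℕ × ℕ | 2 ≤ T.1 ∧ 1 ≤ T.2.1 ∧ T.2.1 < T.2.2 ∧ ¬ IsPerfectPow T.1 ∧
    T.1 ^ T.2.2 + T.1 ^ T.2.1 = d}.ncard

/-- `Nminus d` is the number of primitive solutions `(g, x, y)` of `g^y - g^x = d`
with `g ≥ 2` not a perfect power and `y > x ≥ 1`. -/
noncomputable def Nminus (d : ℕ) : ℕ :=
  {T : ℕ × ℕ × ℕ | 2 ≤ T.1 ∧ 1 ≤ T.2.1 ∧ T.2.1 < T.2.2 ∧ ¬ IsPerfectPow T.1 ∧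
    T.1 ^ T.2.2 = T.1 ^ T.2.1 + d}.ncard

/-! ### Auxiliary lemmas -/

lemma aux_pow_of_dvd_factorization (m q : ℕ) (hm : m ≠ 0) (hq : q ≠ 0)
    (h : ∀ p, q ∣ m.factorization p) : ∃ c, m = c ^ q := by
  refine ⟨Nat.floorRoot q m, Nat.eq_of_factorization_eq hm
    (pow_ne_zero _ (Nat.floorRoot_ne_zero.2 ⟨hq, hm⟩)) fun p => ?_⟩
  rw [Nat.factorization_pow, Finsupp.smul_apply, Nat.factorization_floorRoot,
    Finsupp.floorDiv_apply, Nat.floorDiv_eq_div, smul_eq_mul,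
    Nat.mul_div_cancel' (h p)]

lemma aux_common_base {m n p q : ℕ} (hm : 2 ≤ m) (hp : 1 ≤ p) (hq : 1 ≤ q)
    (h : m ^ p = n ^ q) : ∃ c u v : ℕ, 2 ≤ c ∧ m = c ^ u ∧ n = c ^ v := by
  set g := Nat.gcd p q with hg
  have hg0 : g ≠ 0 := Nat.gcd_ne_zero_left (by omega)
  have hpg : p / g * g = p := Nat.div_mul_cancel (Nat.gcd_dvd_left p q)
  have hqg : q / g * g = q := Nat.div_mul_cancel (Nat.gcd_dvd_right p q)
  have hp' : 1 ≤ p / g := Nat.one_le_div_iff (by omega) |>.2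
    (Nat.le_of_dvd (by omega) (Nat.gcd_dvd_left p q))
  have hq' : 1 ≤ q / g := Nat.one_le_div_iff (by omega) |>.2
    (Nat.le_of_dvd (by omega) (Nat.gcd_dvd_right p q))
  have hcop : Nat.Coprime (p / g) (q / g) := Nat.coprime_div_gcd_div_gcd (by omega)
  have h2 : m ^ (p / g) = n ^ (q / g) := by
    apply Nat.pow_left_injective (n := g) (by omega)
    simp only [← pow_mul, hpg, hqg, h]
  have hdvd : ∀ ℓ, (q / g) ∣ m.factorization ℓ := by
    intro ℓ
    have hfac : (p / g) * m.factorization ℓ = (q / g) * n.factorization ℓ := by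
      have := congrArg (fun x => x.factorization ℓ) h2
      simpa [Nat.factorization_pow] using this
    exact (Nat.Coprime.dvd_of_dvd_mul_left hcop.symm ⟨n.factorization ℓ, hfac⟩)
  obtain ⟨c, hc⟩ := aux_pow_of_dvd_factorization m (q / g) (by omega) (by omega) hdvd
  have hc2 : 2 ≤ c := by
    by_contra h'
    push_neg at h'
    interval_cases c
    · rw [zero_pow (by omega)] at hc; omega
    · rw [one_pow] at hc; omega
  have hn' : n = c ^ (p / g) := by
    refine (Nat.pow_left_injective (n := q / g) (by omega) ?_).symm
    calc (c ^ (p / g)) ^ (q / g) = (c ^ (q / g)) ^ (p / g) := by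
          rw [← pow_mul, ← pow_mul, mul_comm]
      _ = m ^ (p / g) := by rw [← hc]
      _ = n ^ (q / g) := h2
  exact ⟨c, q / g, p / g, hc2, hc, hn'⟩

lemma aux_ratio {m n p q : ℕ} (hm : 2 ≤ m) (hp : 1 ≤ p) (hq : 1 ≤ q)
    (h : m ^ p = n ^ q) : m = n ∨ 2 * m ≤ n ∨ 2 * n ≤ m := by
  obtain ⟨c, u, v, hc, rfl, rfl⟩ := aux_common_base hm hp hq h
  rcases lt_trichotomy u v with h' | rfl | h'
  · right; left
    calc 2 * c ^ u ≤ c ^ u * c ^ (v - u) := by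
          have h2 : 2 ≤ c ^ (v - u) := le_trans hc (Nat.le_self_pow (by omega) c)
          nlinarith [pow_pos (show 0 < c by omega) u]
      _ = c ^ v := by rw [← pow_add]; congr 1; omega
  · left; rfl
  · right; right
    calc 2 * c ^ v ≤ c ^ v * c ^ (u - v) := by
          have h2 : 2 ≤ c ^ (u - v) := le_trans hc (Nat.le_self_pow (by omega) c)
          nlinarith [pow_pos (show 0 < c by omega) v]
      _ = c ^ u := by rw [← pow_add]; congr 1; omega

lemma aux_abs_zpow (x : ℚ) (k : ℤ) : |x ^ k| = |x| ^ k := by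
  rcases k with k | k <;> simp [abs_pow, zpow_negSucc, abs_inv]

lemma aux_nat_of_zpow {A B : ℚ} {s t : ℤ} (hA : 1 < A) (hB : 1 < B) (hs : 0 < s)
    (h : A ^ s = B ^ t) : ∃ P Q : ℕ, 1 ≤ P ∧ 1 ≤ Q ∧ A ^ P = B ^ Q := by
  have hmB := zpow_right_strictMono₀ hB
  have ht : 0 < t := by
    have h1 : (1 : ℚ) < A ^ s := by
      have := (zpow_right_strictMono₀ hA) hs
      simpa using this
    rw [h] at h1
    by_contra h'
    push_neg at h'
    have h2 := hmB.monotone h'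
    simp only [zpow_zero] at h2
    exact absurd (lt_of_lt_of_le h1 h2) (by norm_num)
  refine ⟨s.toNat, t.toNat, by omega, by omega, ?_⟩
  rw [← Int.toNat_of_nonneg hs.le, ← Int.toNat_of_nonneg ht.le, zpow_natCast, zpow_natCast] at h
  exact h

lemma aux_dep_absbound {a b : ℤ} (ha : a ≠ 0) (hb : b ≠ 0)
    (h : ∃ k : ℤ × ℤ, k ≠ 0 ∧ (a : ℚ) ^ k.1 * (b : ℚ) ^ k.2 = 1) :
    a.natAbs = 1 ∨ b.natAbs = 1 ∨ a.natAbs = b.natAbs ∨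
      2 * a.natAbs ≤ b.natAbs ∨ 2 * b.natAbs ≤ a.natAbs := by
  obtain ⟨⟨k1, k2⟩, hk, he⟩ := h
  by_cases hm1 : a.natAbs = 1
  · exact Or.inl hm1
  by_cases hn1 : b.natAbs = 1
  · exact Or.inr (Or.inl hn1)
  have hm : 2 ≤ a.natAbs := by have := Int.natAbs_pos.2 ha; omega
  have hn : 2 ≤ b.natAbs := by have := Int.natAbs_pos.2 hb; omega
  have hA : (1 : ℚ) < (a.natAbs : ℚ) := by exact_mod_cast hm
  have hB : (1 : ℚ) < (b.natAbs : ℚ) := by exact_mod_cast hn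
  have hAabs : ((a.natAbs : ℚ)) = |(a : ℚ)| := by push_cast [Nat.cast_natAbs]; ring
  have hBabs : ((b.natAbs : ℚ)) = |(b : ℚ)| := by push_cast [Nat.cast_natAbs]; ring
  have habs : (a.natAbs : ℚ) ^ k1 * (b.natAbs : ℚ) ^ k2 = 1 := by
    rw [hAabs, hBabs, ← aux_abs_zpow, ← aux_abs_zpow, ← abs_mul, he, abs_one]
  have h2 : (a.natAbs : ℚ) ^ k1 = (b.natAbs : ℚ) ^ (-k2) := by
    rw [zpow_neg]
    exact eq_inv_of_mul_eq_one_left habs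
  have key : ∃ P Q : ℕ, 1 ≤ P ∧ 1 ≤ Q ∧ a.natAbs ^ P = b.natAbs ^ Q := by
    rcases lt_trichotomy k1 0 with hk1 | rfl | hk1
    · have h3 : (a.natAbs : ℚ) ^ (-k1) = (b.natAbs : ℚ) ^ k2 := by
        rw [zpow_neg, h2, zpow_neg, inv_inv]
      obtain ⟨P, Q, hP, hQ, hPQ⟩ := aux_nat_of_zpow hA hB (by omega) h3
      exact ⟨P, Q, hP, hQ, by exact_mod_cast hPQ⟩
    · exfalso
      simp only [zpow_zero] at h2
      have h4 : (b.natAbs : ℚ) ^ (-k2) = (b.natAbs : ℚ) ^ (0 : ℤ) := by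
        rw [zpow_zero]; exact h2.symm
      have h5 := (zpow_right_strictMono₀ hB).injective h4
      exact hk (by rw [Prod.ext_iff]; constructor <;> simp <;> omega)
    · obtain ⟨P, Q, hP, hQ, hPQ⟩ := aux_nat_of_zpow hA hB hk1 h2
      exact ⟨P, Q, hP, hQ, by exact_mod_cast hPQ⟩
  obtain ⟨P, Q, hP, hQ, hPQ⟩ := key
  have := aux_ratio hm hP hQ hPQ
  omega

lemma aux_mset_finite {d : ℤ} (hd : 1 ≤ d) : (MSet d).Finite := by
  apply Set.Finite.subset ((Set.finite_Icc (-(2 * d)) (2 * d)).image (fun a => (a, a + d)))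
  rintro ⟨a, b⟩ hab
  simp only [MSet, Set.mem_setOf_eq] at hab
  obtain ⟨⟨hab0, hk⟩, hdiff⟩ := hab
  have ha : a ≠ 0 := fun h => hab0 (by simp [h])
  have hb : b ≠ 0 := fun h => hab0 (by simp [h])
  have hcases := aux_dep_absbound ha hb hk
  refine ⟨a, ?_, ?_⟩
  · rw [Set.mem_Icc]; omega
  · simp only [Prod.mk.injEq]
    exact ⟨trivial, by omega⟩

lemma aux_multdep {a b : ℤ} (h0 : a ≠ 0) (h0' : b ≠ 0) (u v : ℕ) (huv : u ≠ 0 ∨ v ≠ 0)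
    (h : (a : ℚ) ^ u = (b : ℚ) ^ v) : MultDepPair a b := by
  refine ⟨mul_ne_zero h0 h0', ⟨((u : ℤ), -(v : ℤ)), ?_, ?_⟩⟩
  · rw [Ne, Prod.ext_iff]
    intro hcon
    simp only [Prod.fst_zero, Prod.snd_zero] at hcon
    omega
  · have hbv : ((b : ℚ)) ^ v ≠ 0 := pow_ne_zero _ (Int.cast_ne_zero.2 h0')
    simp only [zpow_neg, zpow_natCast]
    rw [h, mul_inv_cancel₀ hbv]

lemma exists_primitive (n : ℕ) : 2 ≤ n →
    ∃ g m : ℕ, 2 ≤ g ∧ 1 ≤ m ∧ ¬ IsPerfectPow g ∧ n = g ^ m := by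
  induction n using Nat.strong_induction_on with
  | _ n ih =>
    intro hn
    by_cases h : IsPerfectPow n
    · obtain ⟨a, k, ha, hk, rfl⟩ := h
      have hlt : a < a ^ k := by
        calc a = a ^ 1 := (pow_one a).symm
          _ < a ^ k := Nat.pow_lt_pow_right (by omega) (by omega)
      obtain ⟨g, m, hg, hm, hgp, hgm⟩ := ih a hlt ha
      exact ⟨g, m * k, hg, Nat.mul_pos (by omega) (by omega), hgp, by rw [pow_mul, ← hgm]⟩
    · exact ⟨n, 1, hn, le_rfl, h, (pow_one n).symm⟩

theorem stmt19 (n : ℕ) (hn : 2 ≤ n) :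
    1 ≤ Nplus (n ^ 2 + n) ∧ 1 ≤ Nminus (n ^ 2 + n) ∧ 9 ≤ M ((n ^ 2 + n : ℕ) : ℤ) := by
  refine ⟨?_, ?_, ?_⟩
  · -- Nplus
    have hfin : ({T : ℕ × ℕ × ℕ | 2 ≤ T.1 ∧ 1 ≤ T.2.1 ∧ T.2.1 < T.2.2 ∧ ¬ IsPerfectPow T.1 ∧
        T.1 ^ T.2.2 + T.1 ^ T.2.1 = n ^ 2 + n} : Set (ℕ × ℕ × ℕ)).Finite := by
      apply Set.Finite.subset ((Set.finite_Iic (n ^ 2 + n)).prod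
        ((Set.finite_Iic (n ^ 2 + n)).prod (Set.finite_Iic (n ^ 2 + n))))
      rintro ⟨g, x, y⟩ hT
      simp only [Set.mem_setOf_eq] at hT
      obtain ⟨hg, hx, hxy, -, heq⟩ := hT
      have hgx : g ≤ g ^ x := Nat.le_self_pow (n := x) (Nat.one_le_iff_ne_zero.mp hx) g
      have hgy : y < g ^ y := by
        calc y < 2 ^ y := Nat.lt_two_pow_self
          _ ≤ g ^ y := Nat.pow_le_pow_left hg y
      simp only [Set.mem_prod, Set.mem_Iic]
      exact ⟨by omega, by omega, by omega⟩
    have hne : ({T : ℕ × ℕ × ℕ | 2 ≤ T.1 ∧ 1 ≤ T.2.1 ∧ T.2.1 < T.2.2 ∧ ¬ IsPerfectPow T.1 ∧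
        T.1 ^ T.2.2 + T.1 ^ T.2.1 = n ^ 2 + n} : Set (ℕ × ℕ × ℕ)).Nonempty := by
      obtain ⟨g, m, hg, hm, hgp, hgm⟩ := exists_primitive n hn
      refine ⟨(g, m, 2 * m), ?_⟩
      simp only [Set.mem_setOf_eq]
      refine ⟨hg, hm, by omega, hgp, ?_⟩
      rw [show 2 * m = m * 2 by ring, pow_mul, ← hgm]
    rw [Nplus]
    exact (Set.ncard_pos hfin).2 hne
  · -- Nminus
    have hfin : ({T : ℕ × ℕ × ℕ | 2 ≤ T.1 ∧ 1 ≤ T.2.1 ∧ T.2.1 < T.2.2 ∧ ¬ IsPerfectPow T.1 ∧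
        T.1 ^ T.2.2 = T.1 ^ T.2.1 + (n ^ 2 + n)} : Set (ℕ × ℕ × ℕ)).Finite := by
      apply Set.Finite.subset ((Set.finite_Iic (n ^ 2 + n)).prod
        ((Set.finite_Iic (n ^ 2 + n)).prod (Set.finite_Iic (n ^ 2 + n))))
      rintro ⟨g, x, y⟩ hT
      simp only [Set.mem_setOf_eq] at hT
      obtain ⟨hg, hx, hxy, -, heq⟩ := hT
      have h1 : g ^ x ≤ g ^ (y - 1) := Nat.pow_le_pow_right (by omega) (by omega)
      have h2 : g ^ (y - 1) * 2 ≤ g ^ (y - 1) * g := Nat.mul_le_mul_left _ hg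
      have h3 : g ^ (y - 1) * g = g ^ y := by
        rw [← pow_succ]; congr 1; omega
      have hgy : y - 1 < 2 ^ (y - 1) := Nat.lt_two_pow_self
      have h5 : 2 ^ (y - 1) ≤ g ^ (y - 1) := Nat.pow_le_pow_left hg _
      have h6 : g ≤ g ^ (y - 1) := Nat.le_self_pow (n := y - 1) (by omega) g
      simp only [Set.mem_prod, Set.mem_Iic]
      exact ⟨by omega, by omega, by omega⟩
    have hne : ({T : ℕ × ℕ × ℕ | 2 ≤ T.1 ∧ 1 ≤ T.2.1 ∧ T.2.1 < T.2.2 ∧ ¬ IsPerfectPow T.1 ∧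
        T.1 ^ T.2.2 = T.1 ^ T.2.1 + (n ^ 2 + n)} : Set (ℕ × ℕ × ℕ)).Nonempty := by
      obtain ⟨g, m, hg, hm, hgp, hgm⟩ := exists_primitive (n + 1) (by omega)
      refine ⟨(g, m, 2 * m), ?_⟩
      simp only [Set.mem_setOf_eq]
      refine ⟨hg, hm, by omega, hgp, ?_⟩
      rw [show 2 * m = m * 2 by ring, pow_mul, ← hgm]
      ring
    rw [Nminus]
    exact (Set.ncard_pos hfin).2 hne
  · -- M ≥ 9
    obtain ⟨N, hN⟩ : ∃ N : ℤ, N = (n : ℤ) := ⟨_, rfl⟩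
    obtain ⟨K, hK⟩ : ∃ K : ℤ, K = N ^ 2 := ⟨_, rfl⟩
    have hN2 : 2 ≤ N := by rw [hN]; exact_mod_cast hn
    have hKN : 2 * N ≤ K := by rw [hK]; nlinarith
    have hDK : ((n ^ 2 + n : ℕ) : ℤ) = K + N := by rw [hK, hN]; push_cast; ring
    rw [hDK]
    obtain ⟨c, hc⟩ : ∃ c : ℤ, c + c = K + N := by
      have he : Even (K + N) := by
        rw [hK, show N ^ 2 + N = N * (N + 1) by ring]
        exact Int.even_mul_succ_self N
      obtain ⟨c, hc'⟩ := he
      exact ⟨c, hc'.symm⟩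
    have hfin : (MSet (K + N)).Finite := aux_mset_finite (by omega)
    set F : Finset (ℤ × ℤ) := {(1, K + N + 1), (-1, K + N - 1), (-K - N - 1, -1),
      (1 - K - N, 1), (N + 1, K + 2 * N + 1), (-K - 2 * N - 1, -N - 1), (-N, K), (-K, N),
      (-c, c)} with hF
    have hsub : (↑F : Set (ℤ × ℤ)) ⊆ MSet (K + N) := by
      intro p hp
      rw [hF] at hp
      simp only [Finset.coe_insert, Set.mem_insert_iff, Finset.coe_singleton,
        Set.mem_singleton_iff] at hp
      rcases hp with rfl | rfl | rfl | rfl | rfl | rfl | rfl | rfl | rfl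
      · exact ⟨aux_multdep (by omega) (by omega) 1 0 (Or.inl one_ne_zero)
          (by push_cast; norm_num), by simp only; omega⟩
      · exact ⟨aux_multdep (by omega) (by omega) 2 0 (Or.inl two_ne_zero)
          (by push_cast; norm_num), by simp only; omega⟩
      · exact ⟨aux_multdep (by omega) (by omega) 0 2 (Or.inr two_ne_zero)
          (by push_cast; norm_num), by simp only; omega⟩
      · exact ⟨aux_multdep (by omega) (by omega) 0 1 (Or.inr one_ne_zero)
          (by push_cast; norm_num), by simp only; omega⟩
      · exact ⟨aux_multdep (by omega) (by omega) 2 1 (Or.inl two_ne_zero)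
          (by push_cast [hK]; ring), by simp only; omega⟩
      · exact ⟨aux_multdep (by omega) (by omega) 2 4 (Or.inl two_ne_zero)
          (by push_cast [hK]; ring), by simp only; omega⟩
      · exact ⟨aux_multdep (by omega) (by omega) 2 1 (Or.inl two_ne_zero)
          (by push_cast [hK]; ring), by simp only; omega⟩
      · exact ⟨aux_multdep (by omega) (by omega) 2 4 (Or.inl two_ne_zero)
          (by push_cast [hK]; ring), by simp only; omega⟩
      · exact ⟨aux_multdep (by omega) (by omega) 2 2 (Or.inl two_ne_zero)
          (by push_cast; ring), by simp only; omega⟩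
    have hcard : F.card = 9 := by
      rw [hF]
      rw [Finset.card_insert_of_notMem (by
        simp only [Finset.mem_insert, Finset.mem_singleton, Prod.mk.injEq]; omega)]
      rw [Finset.card_insert_of_notMem (by
        simp only [Finset.mem_insert, Finset.mem_singleton, Prod.mk.injEq]; omega)]
      rw [Finset.card_insert_of_notMem (by
        simp only [Finset.mem_insert, Finset.mem_singleton, Prod.mk.injEq]; omega)]
      rw [Finset.card_insert_of_notMem (by
        simp only [Finset.mem_insert, Finset.mem_singleton, Prod.mk.injEq]; omega)]
      rw [Finset.card_insert_of_notMem (by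
        simp only [Finset.mem_insert, Finset.mem_singleton, Prod.mk.injEq]; omega)]
      rw [Finset.card_insert_of_notMem (by
        simp only [Finset.mem_insert, Finset.mem_singleton, Prod.mk.injEq]; omega)]
      rw [Finset.card_insert_of_notMem (by
        simp only [Finset.mem_insert, Finset.mem_singleton, Prod.mk.injEq]; omega)]
      rw [Finset.card_insert_of_notMem (by
        simp only [Finset.mem_singleton, Prod.mk.injEq]; omega)]
      rw [Finset.card_singleton]
    calc (9 : ℕ) = F.card := hcard.symm
      _ = (↑F : Set (ℤ × ℤ)).ncard := (Set.ncard_coe_finset F).symm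
      _ ≤ (MSet (K + N)).ncard := Set.ncard_le_ncard hsub hfin
      _ = M (K + N) := rfl
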